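/- Let E₁, E₂ > 0 with E₁ ≠ E₂. If cos(√E₁) = cos(√E₂) and sin(√E₁)/√E₁ = sin(√E₂)/√E₂, then there exist non-negative integers k₁, k₂ with the same parity (i.e. (−1)^{k₁} = (−1)^{k₂}) such that E₁ = (k₁ π)² and E₂ = (k₂ π)². -/

import Mathlib

open Real

theorem stmt_6 (E₁ E₂ : ℝ) (hE₁ : 0 < E₁) (hE₂ : 0 < E₂) (hne : E₁ ≠ E₂)
    (hcos : Real.cos (Real.sqrt E₁) = Real.cos (Real.sqrt E₂))
    (hsin : Real.sin (Real.sqrt E₁) / Real.sqrt E₁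
          = Real.sin (Real.sqrt E₂) / Real.sqrt E₂) :
    ∃ k₁ k₂ : ℕ, (-1 : ℝ) ^ k₁ = (-1 : ℝ) ^ k₂ ∧
      E₁ = (k₁ * Real.pi) ^ 2 ∧ E₂ = (k₂ * Real.pi) ^ 2 := by
  set x := Real.sqrt E₁ with hx
  set y := Real.sqrt E₂ with hy
  have hx0 : 0 < x := Real.sqrt_pos.mpr hE₁
  have hy0 : 0 < y := Real.sqrt_pos.mpr hE₂
  have hxy : x ≠ y := fun h => hne (by
    have := congrArg (· ^ 2) h
    simpa [hx, hy, Real.sq_sqrt hE₁.le, Real.sq_sqrt hE₂.le] using this)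
  -- sin²x = sin²y
  have hsq : Real.sin x ^ 2 = Real.sin y ^ 2 := by
    have h1 := Real.sin_sq_add_cos_sq x
    have h2 := Real.sin_sq_add_cos_sq y
    rw [hcos] at h1
    linarith
  have hsinx : Real.sin x = 0 := by
    by_contra hne0
    have habs : Real.sin x = Real.sin y ∨ Real.sin x = -Real.sin y := by
      have := sq_eq_sq_iff_eq_or_eq_neg.mp hsq
      tauto
    rcases habs with h | h
    · have hsy : Real.sin y ≠ 0 := fun h0 => hne0 (h.trans h0)
      rw [h] at hsin
      have : x = y := by
        rw [div_eq_div_iff hx0.ne' hy0.ne'] at hsin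
        exact (mul_left_cancel₀ hsy hsin).symm
      exact hxy this
    · have hsy : Real.sin y ≠ 0 := fun h0 => hne0 (by rw [h, h0, neg_zero])
      rw [h] at hsin
      have h1 : -Real.sin y / x < 0 ∨ 0 < -Real.sin y / x := by
        rcases hsy.lt_or_gt with hs | hs
        · right; exact div_pos (by linarith) hx0
        · left; exact div_neg_of_neg_of_pos (by linarith) hx0
      have h2 : Real.sin y / y < 0 ∨ 0 < Real.sin y / y := by
        rcases hsy.lt_or_gt with hs | hs
        · left; exact div_neg_of_neg_of_pos hs hy0
        · right; exact div_pos hs hy0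
      -- signs are opposite, contradiction with hsin
      rcases hsy.lt_or_gt with hs | hs
      · have hl : 0 < -Real.sin y / x := div_pos (by linarith) hx0
        have hr : Real.sin y / y < 0 := div_neg_of_neg_of_pos hs hy0
        linarith [hsin]
      · have hl : -Real.sin y / x < 0 := div_neg_of_neg_of_pos (by linarith) hx0
        have hr : 0 < Real.sin y / y := div_pos hs hy0
        linarith [hsin]
  have hsiny : Real.sin y = 0 := by
    have : Real.sin y ^ 2 = 0 := by rw [← hsq, hsinx]; ring
    exact pow_eq_zero_iff (by norm_num) |>.mp this
  obtain ⟨n, hn⟩ := Real.sin_eq_zero_iff.mp hsinx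
  obtain ⟨m, hm⟩ := Real.sin_eq_zero_iff.mp hsiny
  have hn0 : 0 < n := by
    by_contra h
    push_neg at h
    have : (n : ℝ) * π ≤ 0 := mul_nonpos_of_nonpos_of_nonneg (by exact_mod_cast h) Real.pi_pos.le
    linarith [hn ▸ hx0]
  have hm0 : 0 < m := by
    by_contra h
    push_neg at h
    have : (m : ℝ) * π ≤ 0 := mul_nonpos_of_nonpos_of_nonneg (by exact_mod_cast h) Real.pi_pos.le
    linarith [hm ▸ hy0]
  have hxn : x = (n.toNat : ℝ) * π := by
    rw [← hn]; congr 1; exact_mod_cast (Int.toNat_of_nonneg hn0.le).symm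
  have hym : y = (m.toNat : ℝ) * π := by
    rw [← hm]; congr 1; exact_mod_cast (Int.toNat_of_nonneg hm0.le).symm
  refine ⟨n.toNat, m.toNat, ?_, ?_, ?_⟩
  · have hcx : Real.cos x = (-1 : ℝ) ^ n.toNat := by
      rw [hxn, show ((n.toNat : ℝ)) * π = (n.toNat : ℝ) * π - 0 by ring,
        Real.cos_nat_mul_pi_sub, Real.cos_zero, mul_one]
    have hcy : Real.cos y = (-1 : ℝ) ^ m.toNat := by
      rw [hym, show ((m.toNat : ℝ)) * π = (m.toNat : ℝ) * π - 0 by ring,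
        Real.cos_nat_mul_pi_sub, Real.cos_zero, mul_one]
    rw [← hcx, ← hcy, hcos]
  · rw [← Real.sq_sqrt hE₁.le, ← hx, hxn]
  · rw [← Real.sq_sqrt hE₂.le, ← hy, hym]
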